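/- Consider the structural equation model X := ε_X, W := h(X, ε_W), Y := f(W, ε_Y), where ε_X, ε_W, ε_Y are independent random elements on a probability space (Ω, F, P) with values in ℝ, ℝ^m, ℝ^l respectively, and h : ℝ × ℝ^m → ℝ and f : ℝ × ℝ^l → ℝ are measurable with f bounded. Define the interventional expectation E[Y | do(X = x)] := E[f(h(x, ε_W), ε_Y)]. Then the function g(x) := E[f(h(x, ε_W), ε_Y)] is measurable and g(X) is a version of the conditional expectation E[Y | σ(X)]; i.e., for this model (which has a directed path X → W → Y and no backdoor paths from X to Y), the interventional expectation equals the observational conditional expectation: E[Y | do(X = x)] = E[Y | X = x]. -/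

import Mathlib

open MeasureTheory ProbabilityTheory

/-- **No backdoor paths: interventional = observational conditional expectation.**
In the SEM `X := ε_X`, `W := h(X, ε_W)`, `Y := f(W, ε_Y)` with jointly independent
noises (encoded as `ε_X ⟂ ε_W` and `(ε_X, ε_W) ⟂ ε_Y`), `h, f` measurable and `f`
bounded, the function `g(x) := E[f(h(x, ε_W), ε_Y)] = E[Y | do(X = x)]` is measurable
and `g(X)` is a version of `E[Y | σ(X)]`; i.e. the interventional expectation equals
the observational conditional expectation. -/
theorem interventional_eq_observational_no_backdoor
    {Ω : Type*} [MeasurableSpace Ω] (P : Measure Ω) [IsProbabilityMeasure P]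
    {m l : ℕ} (εX : Ω → ℝ) (εW : Ω → (Fin m → ℝ)) (εY : Ω → (Fin l → ℝ))
    (hεX : Measurable εX) (hεW : Measurable εW) (hεY : Measurable εY)
    (hindep1 : IndepFun εX εW P)
    (hindep2 : IndepFun (fun ω => (εX ω, εW ω)) εY P)
    (h : ℝ → (Fin m → ℝ) → ℝ) (hh : Measurable (Function.uncurry h))
    (f : ℝ → (Fin l → ℝ) → ℝ) (hf : Measurable (Function.uncurry f))
    (B : ℝ) (hfB : ∀ w e, |f w e| ≤ B)
    (X : Ω → ℝ) (W : Ω → ℝ) (Y : Ω → ℝ)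
    (hX : X = εX)
    (hWdef : ∀ ω, W ω = h (X ω) (εW ω))
    (hYdef : ∀ ω, Y ω = f (W ω) (εY ω)) :
    Measurable (fun x => ∫ ω, f (h x (εW ω)) (εY ω) ∂P) ∧
    P[Y | MeasurableSpace.comap X inferInstance]
      =ᵐ[P] fun ω => ∫ ω', f (h (X ω) (εW ω')) (εY ω') ∂P := by
  subst hX
  -- the mechanism as a single measurable function of (x, (w, y))
  set Φ : ℝ × ((Fin m → ℝ) × (Fin l → ℝ)) → ℝ := fun q => f (h q.1 q.2.1) q.2.2 with hΦdef
  have hΦ : Measurable Φ := by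
    have h1 : Measurable fun q : ℝ × ((Fin m → ℝ) × (Fin l → ℝ)) => h q.1 q.2.1 :=
      hh.comp (measurable_fst.prodMk (measurable_fst.comp measurable_snd))
    exact hf.comp (h1.prodMk (measurable_snd.comp measurable_snd))
  have hΦB : ∀ q, ‖Φ q‖ ≤ B := fun q => by simpa [Real.norm_eq_abs] using hfB _ _
  -- Laws
  set μX := P.map X with hμX
  set μW := P.map εW with hμW
  set μY := P.map εY with hμY
  haveI hpX : IsProbabilityMeasure μX := Measure.isProbabilityMeasure_map hεX.aemeasurable
  haveI hpW : IsProbabilityMeasure μW := Measure.isProbabilityMeasure_map hεW.aemeasurable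
  haveI hpY : IsProbabilityMeasure μY := Measure.isProbabilityMeasure_map hεY.aemeasurable
  have hWY : Measurable fun ω => (εW ω, εY ω) := hεW.prodMk hεY
  have hXWY : Measurable fun ω => (X ω, (εW ω, εY ω)) := hεX.prodMk hWY
  have hmXW : P.map (fun ω => (X ω, εW ω)) = μX.prod μW :=
    (indepFun_iff_map_prod_eq_prod_map_map hεX.aemeasurable hεW.aemeasurable).mp hindep1
  have hmXWY : P.map (fun ω => ((X ω, εW ω), εY ω)) = (μX.prod μW).prod μY := by
    rw [(indepFun_iff_map_prod_eq_prod_map_map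
      (hεX.prodMk hεW).aemeasurable hεY.aemeasurable).mp hindep2, hmXW]
  have hlaw : P.map (fun ω => (X ω, (εW ω, εY ω))) = μX.prod (μW.prod μY) := by
    have hcomp : (fun ω => (X ω, (εW ω, εY ω)))
        = (MeasurableEquiv.prodAssoc : (ℝ × (Fin m → ℝ)) × (Fin l → ℝ) ≃ᵐ _)
          ∘ (fun ω => ((X ω, εW ω), εY ω)) := rfl
    rw [hcomp, ← Measure.map_map MeasurableEquiv.prodAssoc.measurable
      ((hεX.prodMk hεW).prodMk hεY), hmXWY, Measure.prodAssoc_prod]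
  have hνWY : P.map (fun ω => (εW ω, εY ω)) = μW.prod μY := by
    have hcomp : (fun ω => (εW ω, εY ω))
        = Prod.snd ∘ (fun ω => (X ω, (εW ω, εY ω))) := rfl
    rw [hcomp, ← Measure.map_map measurable_snd hXWY, hlaw, Measure.map_snd_prod,
      measure_univ, one_smul]
  -- change of variables for g
  have hg_eq : ∀ x, (∫ ω, f (h x (εW ω)) (εY ω) ∂P) = ∫ p, Φ (x, p) ∂(μW.prod μY) := by
    intro x
    rw [← hνWY]
    exact (integral_map hWY.aemeasurable
      (hΦ.comp (measurable_const.prodMk measurable_id)).aestronglyMeasurable).symm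
  -- measurability of g
  have hgmeas : Measurable (fun x => ∫ ω, f (h x (εW ω)) (εY ω) ∂P) := by
    have := hΦ.stronglyMeasurable.integral_prod_right' (ν := μW.prod μY)
    exact (funext hg_eq ▸ this.measurable : _)
  refine ⟨hgmeas, ?_⟩
  set g : ℝ → ℝ := fun x => ∫ ω, f (h x (εW ω)) (εY ω) ∂P with hgdef
  -- Y as Φ of the joint noises
  have hYeq : ∀ ω, Y ω = Φ (X ω, (εW ω, εY ω)) := by
    intro ω; rw [hYdef ω, hWdef ω]
  have hYmeas : Measurable Y := by
    have : Y = Φ ∘ (fun ω => (X ω, (εW ω, εY ω))) := funext hYeq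
    rw [this]; exact hΦ.comp hXWY
  have hYint : Integrable Y P := by
    refine (integrable_const B).mono' hYmeas.aestronglyMeasurable ?_
    exact Filter.Eventually.of_forall fun ω => by rw [hYeq ω]; exact hΦB _
  have hgB : ∀ x, ‖g x‖ ≤ B := by
    intro x
    calc ‖g x‖ ≤ B * (P Set.univ).toReal :=
          norm_integral_le_of_norm_le_const (Filter.Eventually.of_forall fun ω => by
            simpa [Real.norm_eq_abs] using hfB (h x (εW ω)) (εY ω))
      _ = B := by simp
  have hGmeas : Measurable (g ∘ X) := hgmeas.comp hεX
  have hGint : Integrable (fun ω => g (X ω)) P := by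
    refine (integrable_const B).mono' hGmeas.aestronglyMeasurable ?_
    exact Filter.Eventually.of_forall fun ω => hgB _
  -- Φ is integrable w.r.t. the joint law
  have hΦint : Integrable Φ (μX.prod (μW.prod μY)) := by
    have : IsProbabilityMeasure (μX.prod (μW.prod μY)) := by
      rw [← hlaw]; exact Measure.isProbabilityMeasure_map hXWY.aemeasurable
    exact (integrable_const B).mono' hΦ.aestronglyMeasurable
      (Filter.Eventually.of_forall hΦB)
  -- uniqueness of conditional expectation
  have hm : MeasurableSpace.comap X inferInstance ≤ ‹MeasurableSpace Ω› := hεX.comap_le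
  haveI : SigmaFinite (P.trim hm) := by
    have : IsFiniteMeasure (P.trim hm) := isFiniteMeasure_trim hm
    infer_instance
  refine (ae_eq_condExp_of_forall_setIntegral_eq hm hYint
    (fun s _ _ => hGint.integrableOn) ?_ ?_).symm
  · rintro s ⟨A, hA, rfl⟩ -
    -- RHS: ∫ Y over X⁻¹ A
    have hRHS : ∫ ω in X ⁻¹' A, Y ω ∂P
        = ∫ q in A ×ˢ Set.univ, Φ q ∂(μX.prod (μW.prod μY)) := by
      rw [← hlaw, setIntegral_map (hA.prod MeasurableSet.univ)
        hΦ.aestronglyMeasurable hXWY.aemeasurable]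
      have hpre : (fun ω => (X ω, (εW ω, εY ω))) ⁻¹' (A ×ˢ Set.univ) = X ⁻¹' A := by
        ext ω; simp
      rw [hpre]
      exact setIntegral_congr_fun (hεX hA) fun ω _ => hYeq ω
    have hLHS : ∫ ω in X ⁻¹' A, g (X ω) ∂P = ∫ x in A, g x ∂μX :=
      (setIntegral_map hA (hgmeas.comp_aemeasurable aemeasurable_id).aestronglyMeasurable
        hεX.aemeasurable).symm
    rw [hRHS, hLHS, setIntegral_prod _ hΦint.integrableOn]
    refine setIntegral_congr_fun hA fun x _ => ?_
    rw [Measure.restrict_univ]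
    exact hg_eq x
  · exact (Measurable.stronglyMeasurable (hgmeas.comp
      (Measurable.of_comap_le le_rfl))).aestronglyMeasurable
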